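/- Let d ∈ {1,...,N}, let m_d be a regular moment sequence of order s_d > 0, and let e_d ∈ ℕ^N denote the multi-index with 1 in the d-th coordinate and 0 elsewhere. Then there exists a constant C > 0 (depending only on m_d) such that for every f analytic on the polydisc D_{ρ₁,...,ρ_N}, every α ∈ [1,∞)^N, every s = (s₁,...,s_N) with s_d the order of m_d and all components positive, and every 0 < r < min(ρ₁,...,ρ_N): ‖∂_{m_d;x_d} f‖_{α+e_d,r,s} ≤ C · α_d^{s_d} · ‖f‖_{α,r,s}. -/

import Mathlib

/-- A regular moment sequence of order `s > 0`. -/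
def IsRegularMomentSeq (m : ℕ → ℝ) (s : ℝ) : Prop :=
  m 0 = 1 ∧ (∀ j, 0 < m j) ∧
    ∃ a A : ℝ, 0 < a ∧ 0 < A ∧ ∀ j : ℕ,
      a * ((j : ℝ) + 1) ^ s ≤ m (j + 1) / m j ∧ m (j + 1) / m j ≤ A * ((j : ℝ) + 1) ^ s

/-- Generalized binomial coefficient `binom(α+j−1, j) = (∏_{i=0}^{j−1}(α+i))/j!`. -/
noncomputable def genBinom (α : ℝ) (j : ℕ) : ℝ :=
  (∏ i ∈ Finset.range j, (α + i)) / (j.factorial : ℝ)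

/-- Taylor coefficients of an analytic function on the polydisc `D_{ρ₁,...,ρ_N}`. -/
def AnalyticCoeffs {N : ℕ} (ρ : Fin N → ℝ) (f : (Fin N → ℕ) → ℂ) : Prop :=
  ∀ r : Fin N → ℝ, (∀ d, 0 ≤ r d) → (∀ d, r d < ρ d) →
    Summable fun J : Fin N → ℕ => ‖f J‖ * ∏ d, r d ^ J d

/-- The majorization set defining the modified Nagumo norm for `α ≠ 0`. -/
def nagumoSet {N : ℕ} (f : (Fin N → ℕ) → ℂ) (α : Fin N → ℝ) (r : ℝ) (s : Fin N → ℝ) :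
    Set ℝ :=
  {A : ℝ | 0 ≤ A ∧ ∀ J : Fin N → ℕ,
    ‖f J‖ ≤ A * ∏ d, r ^ (-(α d)) * genBinom (α d) (J d) ^ s d * (r ^ J d)⁻¹}

open Classical in
/-- The modified Nagumo norm `‖f‖_{α,r,s}`. -/
noncomputable def nagumoNorm {N : ℕ} (f : (Fin N → ℕ) → ℂ) (α : Fin N → ℝ) (r : ℝ)
    (s : Fin N → ℝ) : ℝ :=
  if α = 0 then ∑' J : Fin N → ℕ, ‖f J‖ * r ^ (∑ d, J d)
  else sInf (nagumoSet f α r s)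

/-- Moment derivative with respect to the variable `x_d`, acting coefficientwise:
the coefficient of `x^J` in `∂_{m_d;x_d} f` is `f_{J+e_d} · m_d(J_d+1)/m_d(J_d)`. -/
noncomputable def momentDerivX {N : ℕ} (d : Fin N) (m : ℕ → ℝ)
    (f : (Fin N → ℕ) → ℂ) : (Fin N → ℕ) → ℂ :=
  fun J => f (J + Pi.single d 1) * ((m (J d + 1) / m (J d) : ℝ) : ℂ)

lemma genBinom_pos {α : ℝ} (hα : 0 < α) (j : ℕ) : 0 < genBinom α j := by
  unfold genBinom
  apply div_pos
  · exact Finset.prod_pos fun i _ => by positivity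
  · exact_mod_cast j.factorial_pos

lemma one_le_genBinom {α : ℝ} (hα : 1 ≤ α) (j : ℕ) : 1 ≤ genBinom α j := by
  unfold genBinom
  rw [le_div_iff₀ (by exact_mod_cast j.factorial_pos), one_mul]
  calc (j.factorial : ℝ) = ∏ i ∈ Finset.range j, ((i : ℝ) + 1) := by
        induction j with
        | zero => simp
        | succ n ih => rw [Finset.prod_range_succ, ← ih]; push_cast [Nat.factorial_succ]; ring
    _ ≤ ∏ i ∈ Finset.range j, (α + i) := by
        apply Finset.prod_le_prod
        · intro i _; positivity
        · intro i _; linarith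

lemma genBinom_succ_mul (α : ℝ) (j : ℕ) :
    genBinom α (j + 1) * ((j : ℝ) + 1) = α * genBinom (α + 1) j := by
  unfold genBinom
  have h : ∏ i ∈ Finset.range (j + 1), (α + i) = α * ∏ i ∈ Finset.range j, (α + 1 + i) := by
    rw [Finset.prod_range_succ']
    push_cast
    rw [add_zero, mul_comm]
    congr 1
    exact Finset.prod_congr rfl fun i _ => by ring
  rw [h, Nat.factorial_succ]
  have hf : (j.factorial : ℝ) ≠ 0 := by exact_mod_cast j.factorial_pos.ne'
  push_cast
  field_simp

lemma genBinom_core {sd Am αd ratio : ℝ} (hαd : 1 ≤ αd) (j : ℕ)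
    (hratle : ratio ≤ Am * ((j : ℝ) + 1) ^ sd) :
    genBinom αd (j + 1) ^ sd * ratio ≤ Am * αd ^ sd * genBinom (αd + 1) j ^ sd := by
  have h1 : 0 < genBinom αd (j + 1) := genBinom_pos (by linarith) _
  have h2 : 0 < genBinom (αd + 1) j := genBinom_pos (by linarith) _
  have h0 : (0:ℝ) < αd := by linarith
  calc genBinom αd (j + 1) ^ sd * ratio
      ≤ genBinom αd (j + 1) ^ sd * (Am * ((j : ℝ) + 1) ^ sd) :=
        mul_le_mul_of_nonneg_left hratle (Real.rpow_nonneg h1.le _)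
    _ = Am * ((genBinom αd (j + 1) * ((j : ℝ) + 1)) ^ sd) := by
        rw [Real.mul_rpow h1.le (by positivity)]; ring
    _ = Am * (αd * genBinom (αd + 1) j) ^ sd := by rw [genBinom_succ_mul]
    _ = Am * αd ^ sd * genBinom (αd + 1) j ^ sd := by
        rw [Real.mul_rpow h0.le h2.le]; ring

/-- If `m_d` is a regular moment sequence of order `s_d > 0`, there is a constant `C > 0`
(depending only on `m_d`) such that
`‖∂_{m_d;x_d} f‖_{α+e_d,r,s} ≤ C · α_d^{s_d} · ‖f‖_{α,r,s}`
for all admissible `f`, `α ∈ [1,∞)^N`, `s` (with `s d = s_d`, all components positive) and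
`0 < r < min(ρ₁,...,ρ_N)`. -/
theorem nagumoNorm_momentDerivX (N : ℕ) (d : Fin N) (sd : ℝ) (hsd : 0 < sd)
    (m : ℕ → ℝ) (hm : IsRegularMomentSeq m sd) :
    ∃ C : ℝ, 0 < C ∧
      ∀ (ρ : Fin N → ℝ), (∀ e, 0 < ρ e) →
      ∀ f : (Fin N → ℕ) → ℂ, AnalyticCoeffs ρ f →
      ∀ α : Fin N → ℝ, (∀ e, 1 ≤ α e) →
      ∀ s : Fin N → ℝ, (∀ e, 0 < s e) → s d = sd →
      ∀ r : ℝ, 0 < r → (∀ e, r < ρ e) →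
        nagumoNorm (momentDerivX d m f) (α + Pi.single d 1) r s ≤
          C * α d ^ sd * nagumoNorm f α r s := by
  obtain ⟨hm0, hmpos, a, Am, ha, hAm, hbound⟩ := hm
  refine ⟨Am, hAm, ?_⟩
  intro ρ hρ f hf α hα s hs hsdd r hr hrρ
  subst hsdd
  have hαd : 1 ≤ α d := hα d
  have hαd0 : (0:ℝ) < α d := lt_of_lt_of_le one_pos hαd
  set c : ℝ := Am * α d ^ s d with hcdef
  have hc : 0 < c := mul_pos hAm (Real.rpow_pos_of_pos hαd0 _)
  have hα0 : α ≠ 0 := by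
    intro h
    have h1 := hα d
    rw [h] at h1
    simp at h1
    linarith
  have hα1 : α + Pi.single d 1 ≠ 0 := by
    intro h
    have h1 := congrFun h d
    simp [Pi.single_eq_same] at h1
    linarith
  unfold nagumoNorm
  rw [if_neg hα1, if_neg hα0]
  -- positivity helpers
  have hrpow : ∀ x : ℝ, 0 < r ^ x := fun x => Real.rpow_pos_of_pos hr x
  have hrn : ∀ n : ℕ, 0 < r ^ n := fun n => pow_pos hr n
  -- Nonemptiness of the nagumo set of f
  have hsum := hf (fun _ => r) (fun _ => hr.le) (fun e => hrρ e)
  set M := ∑' J : Fin N → ℕ, ‖f J‖ * ∏ e, r ^ J e with hMdef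
  have hM0 : 0 ≤ M := tsum_nonneg fun J => by positivity
  have hMb : ∀ J : Fin N → ℕ, ‖f J‖ * ∏ e, r ^ J e ≤ M :=
    fun J => Summable.le_tsum hsum J fun j _ => by positivity
  have hSne : (nagumoSet f α r s).Nonempty := by
    refine ⟨M * ∏ e, r ^ (α e), mul_nonneg hM0 (Finset.prod_nonneg fun e _ => (hrpow _).le), ?_⟩
    intro J
    have h1 : ‖f J‖ ≤ M * (∏ e, r ^ J e)⁻¹ := by
      rw [← div_eq_mul_inv, le_div_iff₀ (Finset.prod_pos fun e _ => hrn _)]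
      exact hMb J
    have hPQ : (∏ e, r ^ (α e)) * ∏ e, r ^ (-(α e)) = 1 := by
      rw [← Finset.prod_mul_distrib]
      apply Finset.prod_eq_one
      intro e _
      rw [← Real.rpow_add hr, add_neg_cancel, Real.rpow_zero]
    calc ‖f J‖ ≤ M * (∏ e, r ^ J e)⁻¹ := h1
      _ = (M * ∏ e, r ^ (α e)) * ∏ e, (r ^ (-(α e)) * (r ^ J e)⁻¹) := by
          rw [Finset.prod_mul_distrib, ← Finset.prod_inv_distrib]
          rw [show (M * ∏ e, r ^ (α e)) * ((∏ e, r ^ (-(α e))) * ∏ e, (r ^ J e)⁻¹)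
              = M * ((∏ e, r ^ (α e)) * ∏ e, r ^ (-(α e))) * ∏ e, (r ^ J e)⁻¹ by ring,
            hPQ, mul_one, Finset.prod_inv_distrib]
      _ ≤ (M * ∏ e, r ^ (α e)) * ∏ e, r ^ (-(α e)) * genBinom (α e) (J e) ^ s e * (r ^ J e)⁻¹ := by
          apply mul_le_mul_of_nonneg_left _
            (mul_nonneg hM0 (Finset.prod_nonneg fun e _ => (hrpow _).le))
          apply Finset.prod_le_prod
          · intro e _
            exact mul_nonneg (hrpow _).le (by positivity)
          · intro e _
            have hg : (1:ℝ) ≤ genBinom (α e) (J e) ^ s e := by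
              calc (1:ℝ) = 1 ^ s e := (Real.one_rpow _).symm
                _ ≤ genBinom (α e) (J e) ^ s e :=
                  Real.rpow_le_rpow zero_le_one (one_le_genBinom (hα e) _) (hs e).le
            calc r ^ (-(α e)) * (r ^ J e)⁻¹
                = r ^ (-(α e)) * 1 * (r ^ J e)⁻¹ := by ring
              _ ≤ r ^ (-(α e)) * genBinom (α e) (J e) ^ s e * (r ^ J e)⁻¹ := by
                  apply mul_le_mul_of_nonneg_right _ (inv_nonneg.mpr (hrn _).le)
                  exact mul_le_mul_of_nonneg_left hg (hrpow _).le
  -- bddBelow of the derivative set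
  have hbdd : BddBelow (nagumoSet (momentDerivX d m f) (α + Pi.single d 1) r s) :=
    ⟨0, fun x hx => hx.1⟩
  -- the key membership
  have hkey : ∀ A ∈ nagumoSet f α r s,
      c * A ∈ nagumoSet (momentDerivX d m f) (α + Pi.single d 1) r s := by
    intro A hA
    refine ⟨mul_nonneg hc.le hA.1, ?_⟩
    intro J
    have hA2 := hA.2 (J + Pi.single d 1)
    -- split hA2's product at d
    rw [Fintype.prod_eq_mul_prod_compl d] at hA2
    have hJd : (J + Pi.single d 1 : Fin N → ℕ) d = J d + 1 := by simp
    have hcompl : ∀ e ∈ ({d}ᶜ : Finset (Fin N)),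
        r ^ (-(α e)) * genBinom (α e) ((J + Pi.single d 1 : Fin N → ℕ) e) ^ s e
          * (r ^ (J + Pi.single d 1 : Fin N → ℕ) e)⁻¹
        = r ^ (-(α e)) * genBinom (α e) (J e) ^ s e * (r ^ J e)⁻¹ := by
      intro e he
      have hne : e ≠ d := by simpa using he
      simp [Pi.single_eq_of_ne hne]
    rw [Finset.prod_congr rfl hcompl, hJd] at hA2
    set P := ∏ e ∈ ({d}ᶜ : Finset (Fin N)),
      r ^ (-(α e)) * genBinom (α e) (J e) ^ s e * (r ^ J e)⁻¹ with hPdef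
    have hP0 : 0 ≤ P := Finset.prod_nonneg fun e _ => by
      apply mul_nonneg (mul_nonneg (hrpow _).le _) (inv_nonneg.mpr (hrn _).le)
      have := genBinom_pos (lt_of_lt_of_le one_pos (hα e)) (J e)
      positivity
    -- split goal's product at d
    rw [Fintype.prod_eq_mul_prod_compl d]
    have hαJd : (α + Pi.single d 1 : Fin N → ℝ) d = α d + 1 := by simp
    have hcompl2 : ∀ e ∈ ({d}ᶜ : Finset (Fin N)),
        r ^ (-((α + Pi.single d 1 : Fin N → ℝ) e)) * genBinom ((α + Pi.single d 1 : Fin N → ℝ) e) (J e) ^ s e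
          * (r ^ J e)⁻¹
        = r ^ (-(α e)) * genBinom (α e) (J e) ^ s e * (r ^ J e)⁻¹ := by
      intro e he
      have hne : e ≠ d := by simpa using he
      simp [Pi.single_eq_of_ne hne]
    rw [Finset.prod_congr rfl hcompl2, hαJd, ← hPdef]
    -- compute the lhs abs
    have hrat : 0 < m (J d + 1) / m (J d) := div_pos (hmpos _) (hmpos _)
    have hlhs : ‖momentDerivX d m f J‖
        = ‖f (J + Pi.single d 1)‖ * (m (J d + 1) / m (J d)) := by
      unfold momentDerivX
      rw [norm_mul, Complex.norm_real, Real.norm_of_nonneg hrat.le]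
    rw [hlhs]
    -- core single-variable inequality
    have hcore : (r ^ (-(α d)) * genBinom (α d) (J d + 1) ^ s d * (r ^ (J d + 1))⁻¹)
          * (m (J d + 1) / m (J d))
        ≤ c * (r ^ (-(α d + 1)) * genBinom (α d + 1) (J d) ^ s d * (r ^ J d)⁻¹) := by
      have hTT : r ^ (-(α d)) * (r ^ (J d + 1) : ℝ)⁻¹ = r ^ (-(α d + 1)) * (r ^ J d)⁻¹ := by
        rw [pow_succ, mul_inv, show -(α d + 1) = -(α d) + (-1) by ring,
          Real.rpow_add hr, Real.rpow_neg_one]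
        ring
      have hc2 := genBinom_core (sd := s d) (Am := Am) hαd (J d) (hbound (J d)).2
      calc (r ^ (-(α d)) * genBinom (α d) (J d + 1) ^ s d * (r ^ (J d + 1))⁻¹)
            * (m (J d + 1) / m (J d))
          = (r ^ (-(α d)) * (r ^ (J d + 1) : ℝ)⁻¹)
            * (genBinom (α d) (J d + 1) ^ s d * (m (J d + 1) / m (J d))) := by ring
        _ ≤ (r ^ (-(α d)) * (r ^ (J d + 1) : ℝ)⁻¹)
            * (Am * α d ^ s d * genBinom (α d + 1) (J d) ^ s d) := by
            apply mul_le_mul_of_nonneg_left hc2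
            exact mul_nonneg (hrpow _).le (inv_nonneg.mpr (hrn _).le)
        _ = c * (r ^ (-(α d + 1)) * genBinom (α d + 1) (J d) ^ s d * (r ^ J d)⁻¹) := by
            rw [hTT, hcdef]; ring
    calc ‖f (J + Pi.single d 1)‖ * (m (J d + 1) / m (J d))
        ≤ A * (r ^ (-(α d)) * genBinom (α d) (J d + 1) ^ s d * (r ^ (J d + 1))⁻¹ * P)
          * (m (J d + 1) / m (J d)) :=
          mul_le_mul_of_nonneg_right hA2 hrat.le
      _ = (A * P) * ((r ^ (-(α d)) * genBinom (α d) (J d + 1) ^ s d * (r ^ (J d + 1))⁻¹)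
          * (m (J d + 1) / m (J d))) := by ring
      _ ≤ (A * P) * (c * (r ^ (-(α d + 1)) * genBinom (α d + 1) (J d) ^ s d * (r ^ J d)⁻¹)) :=
          mul_le_mul_of_nonneg_left hcore (mul_nonneg hA.1 hP0)
      _ = c * A * (r ^ (-(α d + 1)) * genBinom (α d + 1) (J d) ^ s d * (r ^ J d)⁻¹ * P) := by
          ring
  -- conclude
  have hstep : ∀ A ∈ nagumoSet f α r s,
      sInf (nagumoSet (momentDerivX d m f) (α + Pi.single d 1) r s) ≤ c * A :=
    fun A hA => csInf_le hbdd (hkey A hA)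
  have hdiv : sInf (nagumoSet (momentDerivX d m f) (α + Pi.single d 1) r s) / c
      ≤ sInf (nagumoSet f α r s) :=
    le_csInf hSne fun A hA => (div_le_iff₀ hc).mpr (by rw [mul_comm]; exact hstep A hA)
  have := (div_le_iff₀ hc).mp hdiv
  calc sInf (nagumoSet (momentDerivX d m f) (α + Pi.single d 1) r s)
      ≤ sInf (nagumoSet f α r s) * c := this
    _ = Am * α d ^ s d * sInf (nagumoSet f α r s) := by rw [hcdef]; ring
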